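/- Let k : ℕ, let S ∈ Matrix (Fin k) (Fin k) ℂ, and let z ∈ ℂ with ‖z‖ = 1; set ω = z². Then det ((1 − ω) • S + (1 − conj ω) • Sᵀ) = (conj z)^k * (1 − ω)^k * det (z • S − conj z • Sᵀ). -/

import Mathlib

open Matrix

/-- The determinant identity relating the Tristram–Levine form of a Seifert matrix
to the Alexander-polynomial determinant. -/
theorem stmt4 (k : ℕ) (S : Matrix (Fin k) (Fin k) ℂ) (z : ℂ) (hz : ‖z‖ = 1)
    (ω : ℂ) (hω : ω = z ^ 2) :
    ((1 - ω) • S + (1 - (starRingEnd ℂ) ω) • Sᵀ).det =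
      ((starRingEnd ℂ) z) ^ k * (1 - ω) ^ k *
        (z • S - (starRingEnd ℂ) z • Sᵀ).det := by
  have h1 : z * (starRingEnd ℂ) z = 1 := by
    rw [Complex.mul_conj, Complex.normSq_eq_norm_sq, hz]
    norm_num
  have hcc : (starRingEnd ℂ) ω = ((starRingEnd ℂ) z) ^ 2 := by
    rw [hω, map_pow]
  have a1 : (starRingEnd ℂ) z * (1 - ω) * z = 1 - ω := by
    rw [hω]; linear_combination (1 - z ^ 2) * h1
  have a2 : (starRingEnd ℂ) z * (1 - ω) * (starRingEnd ℂ) z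
      = -(1 - (starRingEnd ℂ) ω) := by
    rw [hcc, hω]; linear_combination (-(z * (starRingEnd ℂ) z + 1)) * h1
  have key : (1 - ω) • S + (1 - (starRingEnd ℂ) ω) • Sᵀ
      = ((starRingEnd ℂ) z * (1 - ω)) • (z • S - (starRingEnd ℂ) z • Sᵀ) := by
    rw [smul_sub, smul_smul, smul_smul, a1, a2, neg_smul, sub_neg_eq_add]
  rw [key, det_smul, mul_pow]
  simp [Fintype.card_fin, mul_assoc]
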